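/- Let Q, K, L be ℚ-linear endomorphisms of a ℚ-vector space M satisfying the QK-algebra relations Q∘Q = 0, Q∘K + K∘Q = L, and K∘L + L∘K = 0. Let x ∈ M with Q x = 0, and define the standard K-sequence O^p := (1/p!)·K^p(x) for p ≥ 0. Then Q(O^p) = L(O^(p−1)) for every p ≥ 1; that is, the standard K-sequence is a descendant sequence (a solution of the topological descent equations). -/

import Mathlib

/-- If `Q, K, L` are `ℚ`-linear endomorphisms of a `ℚ`-vector space `M`
with `Q∘Q = 0`, `Q∘K + K∘Q = L`, `K∘L + L∘K = 0`, and `Q x = 0`, then the standard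
`K`-sequence `O^p = (1/p!)·K^p(x)` satisfies the descent equations
`Q(O^p) = L(O^(p−1))` for all `p ≥ 1`. -/
theorem standard_K_sequence_is_descendant {M : Type*} [AddCommGroup M] [Module ℚ M]
    (Q K L : M →ₗ[ℚ] M)
    (hQQ : Q ∘ₗ Q = 0) (hQK : Q ∘ₗ K + K ∘ₗ Q = L) (hKL : K ∘ₗ L + L ∘ₗ K = 0)
    (x : M) (hx : Q x = 0)
    (O : ℕ → M) (hO : ∀ p : ℕ, O p = ((p.factorial : ℚ)⁻¹) • (K ^ p) x) :
    ∀ p : ℕ, 1 ≤ p → Q (O p) = L (O (p - 1)) := by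
  have hQKy : ∀ y : M, Q (K y) = L y - K (Q y) := by
    intro y
    have h := congrArg (fun f : M →ₗ[ℚ] M => f y) hQK
    simp only [LinearMap.add_apply, LinearMap.comp_apply] at h
    exact eq_sub_of_add_eq h
  have hKLy : ∀ y : M, K (L y) = -L (K y) := by
    intro y
    have h := congrArg (fun f : M →ₗ[ℚ] M => f y) hKL
    simp only [LinearMap.add_apply, LinearMap.comp_apply, LinearMap.zero_apply] at h
    exact eq_neg_of_add_eq_zero_left h
  -- key: Q(K^p x) = p • L(K^(p-1) x) for p ≥ 1
  have key : ∀ p : ℕ, Q ((K ^ (p + 1)) x) = ((p : ℚ) + 1) • L ((K ^ p) x) := by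
    intro p
    induction p with
    | zero => simp [pow_succ, hQKy, hx]
    | succ n ih =>
      rw [pow_succ', Module.End.mul_apply, hQKy, ih, map_smul, hKLy,
        pow_succ', Module.End.mul_apply]
      push_cast
      module
  intro p hp
  obtain ⟨q, rfl⟩ := Nat.exists_eq_add_of_le hp
  rw [Nat.add_comm 1 q] at *
  rw [hO, hO, map_smul, map_smul, key, Nat.add_sub_cancel]
  rw [smul_smul]
  congr 1
  rw [Nat.factorial_succ]
  have hq : (q.factorial : ℚ) ≠ 0 := Nat.cast_ne_zero.mpr q.factorial_ne_zero
  field_simp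
  norm_cast
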